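/- The quasi-shuffle product on the Q-vector space QSym_M spanned by words Z(α₁,...,α_k) in nonzero elements of a commutative monoid M — defined recursively by Z(α₁,...,α_k)·Z(β₁,...,β_l) = Z(α₁, (α₂..α_k)·Z(β₁..β_l)) + Z(β₁, Z(α₁..α_k)·(β₂..β_l)) + Z(α₁+β₁, (α₂..α_k)·(β₂..β_l)) — is associative. -/

import Mathlib

set_option linter.unusedSectionVars false
set_option maxHeartbeats 4000000

namespace QSym

variable {M : Type} [AddCommMonoid M]

/-- A word in the nonzero elements of the commutative monoid `M`: a basis element
`Z(α₁, …, α_k)` of `QSym_M`. -/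
abbrev Word (M : Type) [AddCommMonoid M] := List {a : M // a ≠ 0}

/-- `QSym_M`: the `ℚ`-vector space spanned by the words `Z(α₁, …, α_k)`. -/
abbrev QS (M : Type) [AddCommMonoid M] := Word M →₀ ℚ

variable (hM : ∀ a b : M, a ≠ 0 → b ≠ 0 → a + b ≠ 0)

/-- The quasi-shuffle product on basis words, defined recursively:
`Z(α₁,…,α_k)·Z(β₁,…,β_l) = Z(α₁, (α₂…α_k)·Z(β₁…β_l)) + Z(β₁, Z(α₁…α_k)·(β₂…β_l))
+ Z(α₁+β₁, (α₂…α_k)·(β₂…β_l))`. -/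
noncomputable def qsh : Word M → Word M → QS M
  | [], w => Finsupp.single w 1
  | v@(_ :: _), [] => Finsupp.single v 1
  | a :: as, b :: bs =>
      Finsupp.mapDomain (a :: ·) (qsh as (b :: bs))
        + Finsupp.mapDomain (b :: ·) (qsh (a :: as) bs)
        + Finsupp.mapDomain ((⟨a.1 + b.1, hM a.1 b.1 a.2 b.2⟩ : {x : M // x ≠ 0}) :: ·)
            (qsh as bs)
  termination_by v w => v.length + w.length

/-- The quasi-shuffle product on `QSym_M`, extended bilinearly from basis words. -/
noncomputable def qmul (f g : QS M) : QS M :=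
  f.sum fun v c => g.sum fun w d => (c * d) • qsh hM v w

/-! ### Auxiliary machinery for associativity -/

/-- Left extension of `qsh`: multiply a general element by a basis word on the right. -/
noncomputable def Lmul (f : QS M) (w : Word M) : QS M := f.sum fun v c => c • qsh hM v w

/-- Right extension of `qsh`: multiply a basis word by a general element. -/
noncomputable def Rmul (u : Word M) (g : QS M) : QS M := g.sum fun w d => d • qsh hM u w

lemma qsh_nil_left (w : Word M) : qsh hM [] w = Finsupp.single w 1 := by rw [qsh]

lemma qsh_nil_right (v : Word M) : qsh hM v [] = Finsupp.single v 1 := by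
  cases v <;> rw [qsh]

lemma qsh_cons_cons (a b : {x : M // x ≠ 0}) (as bs : Word M) :
    qsh hM (a :: as) (b :: bs) =
      Finsupp.mapDomain (a :: ·) (qsh hM as (b :: bs))
        + Finsupp.mapDomain (b :: ·) (qsh hM (a :: as) bs)
        + Finsupp.mapDomain ((⟨a.1 + b.1, hM a.1 b.1 a.2 b.2⟩ : {x : M // x ≠ 0}) :: ·)
            (qsh hM as bs) := by
  rw [qsh]

lemma Lmul_single (v w : Word M) : Lmul hM (Finsupp.single v 1) w = qsh hM v w := by
  simp [Lmul, Finsupp.sum_single_index]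

lemma Rmul_single (u w : Word M) : Rmul hM u (Finsupp.single w 1) = qsh hM u w := by
  simp [Rmul, Finsupp.sum_single_index]

lemma Lmul_add (f g : QS M) (w : Word M) :
    Lmul hM (f + g) w = Lmul hM f w + Lmul hM g w :=
  Finsupp.sum_add_index' (by simp) (by intros; rw [add_smul])

lemma Rmul_add (u : Word M) (f g : QS M) :
    Rmul hM u (f + g) = Rmul hM u f + Rmul hM u g :=
  Finsupp.sum_add_index' (by simp) (by intros; rw [add_smul])

lemma Lmul_nil (f : QS M) : Lmul hM f [] = f := by
  simp [Lmul, qsh_nil_right, Finsupp.smul_single, Finsupp.sum_single]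

lemma Rmul_id (f : QS M) : Rmul hM [] f = f := by
  simp [Rmul, qsh_nil_left, Finsupp.smul_single, Finsupp.sum_single]

lemma Lmul_mapD (x : {a : M // a ≠ 0}) (f : QS M) (w : Word M) :
    Lmul hM (Finsupp.mapDomain (x :: ·) f) w = f.sum fun xs c => c • qsh hM (x :: xs) w :=
  Finsupp.sum_mapDomain_index (by simp) (by intros; rw [add_smul])

lemma Rmul_mapD (u : Word M) (z : {a : M // a ≠ 0}) (g : QS M) :
    Rmul hM u (Finsupp.mapDomain (z :: ·) g) = g.sum fun ws d => d • qsh hM u (z :: ws) :=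
  Finsupp.sum_mapDomain_index (by simp) (by intros; rw [add_smul])

lemma sum_smul_mapD (g : Word M → Word M) (f : QS M) (h : Word M → QS M) :
    (f.sum fun xs c => c • Finsupp.mapDomain g (h xs)) =
      Finsupp.mapDomain g (f.sum fun xs c => c • h xs) := by
  rw [Finsupp.mapDomain_sum]
  exact Finsupp.sum_congr fun xs _ => (Finsupp.mapDomain_smul _ _).symm

lemma Lmul_cons (x : {a : M // a ≠ 0}) (f : QS M) (c : {a : M // a ≠ 0}) (cs : Word M) :
    Lmul hM (Finsupp.mapDomain (x :: ·) f) (c :: cs) =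
      Finsupp.mapDomain (x :: ·) (Lmul hM f (c :: cs))
        + Finsupp.mapDomain (c :: ·) (Lmul hM (Finsupp.mapDomain (x :: ·) f) cs)
        + Finsupp.mapDomain ((⟨x.1 + c.1, hM x.1 c.1 x.2 c.2⟩ : {a : M // a ≠ 0}) :: ·)
            (Lmul hM f cs) := by
  rw [Lmul_mapD]
  simp_rw [qsh_cons_cons hM x c, smul_add]
  rw [Finsupp.sum_add, Finsupp.sum_add, sum_smul_mapD, sum_smul_mapD, sum_smul_mapD,
    ← Lmul_mapD]
  rfl

lemma Rmul_cons (a : {x : M // x ≠ 0}) (as : Word M) (z : {x : M // x ≠ 0}) (g : QS M) :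
    Rmul hM (a :: as) (Finsupp.mapDomain (z :: ·) g) =
      Finsupp.mapDomain (a :: ·) (Rmul hM as (Finsupp.mapDomain (z :: ·) g))
        + Finsupp.mapDomain (z :: ·) (Rmul hM (a :: as) g)
        + Finsupp.mapDomain ((⟨a.1 + z.1, hM a.1 z.1 a.2 z.2⟩ : {x : M // x ≠ 0}) :: ·)
            (Rmul hM as g) := by
  rw [Rmul_mapD]
  simp_rw [qsh_cons_cons hM a z, smul_add]
  rw [Finsupp.sum_add, Finsupp.sum_add, sum_smul_mapD, sum_smul_mapD, sum_smul_mapD,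
    ← Rmul_mapD]
  rfl

/-- The key associativity identity on basis words. -/
lemma key : ∀ (u v w : Word M), Lmul hM (qsh hM u v) w = Rmul hM u (qsh hM v w)
  | [], v, w => by rw [qsh_nil_left, Lmul_single, Rmul_id]
  | (a :: as), [], w => by rw [qsh_nil_right, Lmul_single, qsh_nil_left, Rmul_single]
  | (a :: as), (b :: bs), [] => by rw [Lmul_nil, qsh_nil_right, Rmul_single]
  | (a :: as), (b :: bs), (c :: cs) => by
    have h1 := key as (b :: bs) (c :: cs)
    have h2 := key (a :: as) bs (c :: cs)
    have h3 := key as bs (c :: cs)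
    have h4 := key (a :: as) (b :: bs) cs
    have h5 := key as (b :: bs) cs
    have h6 := key (a :: as) bs cs
    have h7 := key as bs cs
    have hL : Lmul hM (qsh hM (a :: as) (b :: bs)) (c :: cs) =
        Finsupp.mapDomain (a :: ·) (Lmul hM (qsh hM as (b :: bs)) (c :: cs))
          + Finsupp.mapDomain (b :: ·) (Lmul hM (qsh hM (a :: as) bs) (c :: cs))
          + Finsupp.mapDomain ((⟨a.1 + b.1, hM a.1 b.1 a.2 b.2⟩ : {x : M // x ≠ 0}) :: ·)
              (Lmul hM (qsh hM as bs) (c :: cs))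
          + Finsupp.mapDomain (c :: ·) (Lmul hM (qsh hM (a :: as) (b :: bs)) cs)
          + Finsupp.mapDomain ((⟨a.1 + c.1, hM a.1 c.1 a.2 c.2⟩ : {x : M // x ≠ 0}) :: ·)
              (Lmul hM (qsh hM as (b :: bs)) cs)
          + Finsupp.mapDomain ((⟨b.1 + c.1, hM b.1 c.1 b.2 c.2⟩ : {x : M // x ≠ 0}) :: ·)
              (Lmul hM (qsh hM (a :: as) bs) cs)
          + Finsupp.mapDomain ((⟨a.1 + b.1 + c.1,
                hM _ _ (hM a.1 b.1 a.2 b.2) c.2⟩ : {x : M // x ≠ 0}) :: ·)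
              (Lmul hM (qsh hM as bs) cs) := by
      simp only [qsh_cons_cons hM a b, Lmul_add]
      rw [Lmul_cons, Lmul_cons, Lmul_cons]
      simp only [Finsupp.mapDomain_add]
      abel
    have hR : Rmul hM (a :: as) (qsh hM (b :: bs) (c :: cs)) =
        Finsupp.mapDomain (a :: ·) (Rmul hM as (qsh hM (b :: bs) (c :: cs)))
          + Finsupp.mapDomain (b :: ·) (Rmul hM (a :: as) (qsh hM bs (c :: cs)))
          + Finsupp.mapDomain ((⟨a.1 + b.1, hM a.1 b.1 a.2 b.2⟩ : {x : M // x ≠ 0}) :: ·)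
              (Rmul hM as (qsh hM bs (c :: cs)))
          + Finsupp.mapDomain (c :: ·) (Rmul hM (a :: as) (qsh hM (b :: bs) cs))
          + Finsupp.mapDomain ((⟨a.1 + c.1, hM a.1 c.1 a.2 c.2⟩ : {x : M // x ≠ 0}) :: ·)
              (Rmul hM as (qsh hM (b :: bs) cs))
          + Finsupp.mapDomain ((⟨b.1 + c.1, hM b.1 c.1 b.2 c.2⟩ : {x : M // x ≠ 0}) :: ·)
              (Rmul hM (a :: as) (qsh hM bs cs))
          + Finsupp.mapDomain ((⟨a.1 + b.1 + c.1,
                hM _ _ (hM a.1 b.1 a.2 b.2) c.2⟩ : {x : M // x ≠ 0}) :: ·)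
              (Rmul hM as (qsh hM bs cs)) := by
      simp only [qsh_cons_cons hM b c, Rmul_add]
      rw [Rmul_cons, Rmul_cons, Rmul_cons]
      simp only [Finsupp.mapDomain_add]
      abel
    rw [hL, hR, h1, h2, h3, h4, h5, h6, h7]
  termination_by u v w => u.length + v.length + w.length

/-! ### Bilinearity of `qmul` -/

lemma qmul_def' (f g : QS M) : qmul hM f g = f.sum fun v c => c • Rmul hM v g := by
  unfold qmul Rmul
  exact Finsupp.sum_congr fun v _ => by
    rw [Finsupp.smul_sum]; exact Finsupp.sum_congr fun w _ => mul_smul _ _ _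

lemma qmul_add_left (f f' g : QS M) :
    qmul hM (f + f') g = qmul hM f g + qmul hM f' g := by
  simp only [qmul_def']
  exact Finsupp.sum_add_index' (by simp) (by intros; rw [add_smul])

lemma qmul_add_right (f g g' : QS M) :
    qmul hM f (g + g') = qmul hM f g + qmul hM f g' := by
  simp only [qmul_def']
  rw [← Finsupp.sum_add]
  exact Finsupp.sum_congr fun v _ => by rw [Rmul_add, smul_add]

lemma qmul_smul_left (c : ℚ) (f g : QS M) :
    qmul hM (c • f) g = c • qmul hM f g := by
  simp only [qmul_def']
  rw [Finsupp.sum_smul_index (by simp), Finsupp.smul_sum]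
  exact Finsupp.sum_congr fun v _ => by rw [mul_smul]

lemma Rmul_smul (u : Word M) (c : ℚ) (g : QS M) :
    Rmul hM u (c • g) = c • Rmul hM u g := by
  unfold Rmul
  rw [Finsupp.sum_smul_index (by simp), Finsupp.smul_sum]
  exact Finsupp.sum_congr fun w _ => by rw [mul_smul]

lemma qmul_smul_right (c : ℚ) (f g : QS M) :
    qmul hM f (c • g) = c • qmul hM f g := by
  simp only [qmul_def']
  rw [Finsupp.smul_sum]
  exact Finsupp.sum_congr fun v _ => by rw [Rmul_smul, smul_comm]

lemma qmul_zero_left (g : QS M) : qmul hM 0 g = 0 := by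
  simp [qmul]

lemma qmul_zero_right (f : QS M) : qmul hM f 0 = 0 := by
  simp [qmul]

lemma qmul_single_one_left (u : Word M) (g : QS M) :
    qmul hM (Finsupp.single u 1) g = Rmul hM u g := by
  rw [qmul_def', Finsupp.sum_single_index (by simp), one_smul]

lemma qmul_single_one_right (f : QS M) (w : Word M) :
    qmul hM f (Finsupp.single w 1) = Lmul hM f w := by
  rw [qmul_def']
  exact Finsupp.sum_congr fun v _ => by rw [Rmul_single]

lemma single_eq_smul (u : Word M) (c : ℚ) :
    (Finsupp.single u c : QS M) = c • Finsupp.single u 1 := by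
  rw [Finsupp.smul_single, smul_eq_mul, mul_one]

/-- The quasi-shuffle product on `QSym_M` is associative. -/
theorem qmul_assoc (f g h : QS M) :
    qmul hM (qmul hM f g) h = qmul hM f (qmul hM g h) := by
  induction f using Finsupp.induction_linear with
  | zero => simp [qmul_zero_left]
  | add f f' hf hf' => simp [qmul_add_left, hf, hf']
  | single u c =>
    induction g using Finsupp.induction_linear with
    | zero => simp [qmul_zero_left, qmul_zero_right]
    | add g g' hg hg' => simp [qmul_add_left, qmul_add_right, hg, hg']
    | single v d =>
      induction h using Finsupp.induction_linear with
      | zero => simp [qmul_zero_right]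
      | add h h' hh hh' => simp [qmul_add_right, hh, hh']
      | single w e =>
        rw [single_eq_smul u c, single_eq_smul v d, single_eq_smul w e]
        simp only [qmul_smul_left, qmul_smul_right]
        congr 1; congr 1; congr 1
        rw [qmul_single_one_left, Rmul_single, qmul_single_one_right,
          qmul_single_one_right, Lmul_single, qmul_single_one_left]
        exact key hM u v w

end QSym
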